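/- arXiv:1202.6550 — 2 statements merged into one kernel-verified Lean document; each statement's English description precedes it below -/
import Mathlib

section
/- Let S_λ be a weighted shift on a directed tree 𝒯 = (V, E) with weights λ = {λ_v}_{v ∈ V°}, and let u, w ∈ V be such that Chi(u) = {w} and λ_w ≠ 0. Suppose u is a Stieltjes vertex with respect to S_λ. If the Stieltjes moment sequence {‖S_λⁿ e_w‖²}_{n=0}^∞ is determinate, then both {‖S_λⁿ e_u‖²}_{n=0}^∞ and {‖S_λ^{n+1} e_u‖²}_{n=0}^∞ are determinate Stieltjes moment sequences. -/
open MeasureTheory ENNReal Set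
open scoped Classical

noncomputable section

universe u

/-! ### Stieltjes moment sequences -/

/-- `μ` is a representing measure of the sequence `t`, i.e. a positive Borel measure on `[0,∞)`
(modelled as a Borel measure on `ℝ` vanishing on `(-∞,0)`) such that `∫_0^∞ sⁿ dμ(s) = t n`
for all `n`. -/
def IsRepMeasure (μ : Measure ℝ) (t : ℕ → ℝ) : Prop :=
  μ (Set.Iio 0) = 0 ∧ ∀ n : ℕ, ∫⁻ s, ENNReal.ofReal s ^ n ∂μ = ENNReal.ofReal (t n)

/-- `t` is a Stieltjes moment sequence. -/
def IsStieltjesMomentSeq (t : ℕ → ℝ) : Prop :=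
  (∀ n, 0 ≤ t n) ∧ ∃ μ : Measure ℝ, IsRepMeasure μ t

/-- `t` is a determinate Stieltjes moment sequence: it has exactly one representing measure. -/
def IsDeterminateStieltjes (t : ℕ → ℝ) : Prop :=
  (∀ n, 0 ≤ t n) ∧ ∃! μ : Measure ℝ, IsRepMeasure μ t

/-- a Borel probability measure on `[0,∞)` -/
def IsProbOnRplus (μ : Measure ℝ) : Prop := IsProbabilityMeasure μ ∧ μ (Set.Iio 0) = 0

/-! ### Unbounded operators -/

section Op

variable {H : Type*} [NormedAddCommGroup H] [InnerProductSpace ℂ H]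

/-- Apply a partially defined operator, with junk value `0` outside of the domain. -/
def pApply (S : H →ₗ.[ℂ] H) (x : H) : H := if h : x ∈ S.domain then S ⟨x, h⟩ else 0

/-- `x ∈ D^∞(S)`. -/
def MemDomInf (S : H →ₗ.[ℂ] H) (x : H) : Prop := ∀ n : ℕ, (pApply S)^[n] x ∈ S.domain

/-- The graph of the composition `A ∘ B` of two partially defined operators. -/
def graphComp (A B : H →ₗ.[ℂ] H) : Set (H × H) :=
  {p | ∃ y, (p.1, y) ∈ B.graph ∧ (y, p.2) ∈ A.graph}

/-- A normal (unbounded) operator: closed, densely defined, and `N* N = N N*`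
(as an equality of the graphs of the compositions). -/
def IsNormalOp {K : Type*} [NormedAddCommGroup K] [InnerProductSpace ℂ K] [CompleteSpace K]
    (N : K →ₗ.[ℂ] K) : Prop :=
  Dense (N.domain : Set K) ∧ N.IsClosed ∧
    graphComp N.adjoint N = graphComp N N.adjoint

/-- A densely defined operator `S` in a complex Hilbert space `H` is subnormal if there are a
complex Hilbert space `K`, an isometric embedding `J : H → K` and a normal operator `N` in `K`
extending `J ∘ S ∘ J⁻¹`. -/
def Subnormal {H : Type u} [NormedAddCommGroup H] [InnerProductSpace ℂ H]
    (S : H →ₗ.[ℂ] H) : Prop :=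
  Dense (S.domain : Set H) ∧
    ∃ (K : Type u) (_ : NormedAddCommGroup K) (_ : InnerProductSpace ℂ K) (_ : CompleteSpace K)
      (J : H →ₗᵢ[ℂ] K) (N : K →ₗ.[ℂ] K), IsNormalOp N ∧
        ∀ x : S.domain, ∃ hx : J x ∈ N.domain, N ⟨J x, hx⟩ = J (S x)

/-- `F` is a core of the operator `S`. -/
def IsCore (S : H →ₗ.[ℂ] H) (F : Submodule ℂ H) : Prop :=
  (F : Set H) ⊆ (S.domain : Set H) ∧
    (S.graph : Set (H × H)) ⊆ closure {p : H × H | p.1 ∈ F ∧ p.2 = pApply S p.1}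

end Op

/-! ### ℓ²-spaces and weighted shifts -/

instance : Fact ((1 : ℝ≥0∞) ≤ 2) := ⟨one_le_two⟩

/-- `ℓ²(V)`. -/
abbrev L2 (V : Type*) := lp (fun _ : V => ℂ) 2

section Shift

variable {V : Type*}

/-- the standard basis vector `e_u`, as a function on `V` -/
def eV (u : V) : V → ℂ := fun v => if v = u then 1 else 0

/-- The formal weighted-shift action determined by a partial "parent" function `p` and a weight
function `w` : `(Λ f)(v) = w v * f (parent of v)` if `v` has a parent, and `0` otherwise. -/
def lamOf (p : V → Option V) (w : V → ℂ) : (V → ℂ) →ₗ[ℂ] (V → ℂ) where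
  toFun f v := ((p v).map fun u => w v * f u).getD 0
  map_add' f g := by funext v; cases h : p v <;> simp [h, mul_add]
  map_smul' c f := by funext v; cases h : p v <;> simp [h]; ring

/-- `‖S^n e_u‖²` for the weighted shift with formal action `L`. -/
def momSeqL (L : (V → ℂ) →ₗ[ℂ] (V → ℂ)) (u : V) (n : ℕ) : ℝ :=
  ∑' v, ‖(⇑L)^[n] (eV u) v‖ ^ 2

/-- `e_u ∈ D^∞(S)` for the weighted shift with formal action `L`. -/
def eMemDomInf (L : (V → ℂ) →ₗ[ℂ] (V → ℂ)) (u : V) : Prop :=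
  ∀ n : ℕ, Memℓp ((⇑L)^[n] (eV u)) 2

/-- The (in general unbounded) operator in `ℓ²(V)` associated with the formal action `L`,
with its natural domain `{f ∈ ℓ²(V) : L f ∈ ℓ²(V)}`. -/
def pmOf (L : (V → ℂ) →ₗ[ℂ] (V → ℂ)) : L2 V →ₗ.[ℂ] L2 V where
  domain :=
    { carrier := {f : L2 V | Memℓp (L ⇑f) 2}
      add_mem' := by
        intro f g hf hg
        have h2 : L ⇑(f + g) = L ⇑f + L ⇑g := by
          rw [lp.coeFn_add, map_add]
        simpa only [Set.mem_setOf_eq, h2] using hf.add hg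
      zero_mem' := by
        have h2 : L ⇑(0 : L2 V) = 0 := by rw [lp.coeFn_zero, map_zero]
        simp only [Set.mem_setOf_eq, h2]
        exact zero_memℓp
      smul_mem' := by
        intro c f hf
        have h2 : L ⇑(c • f) = c • L ⇑f := by
          rw [lp.coeFn_smul, _root_.map_smul]
        simpa only [Set.mem_setOf_eq, h2] using hf.const_smul c }
  toFun :=
    { toFun := fun f => (⟨L ⇑(f : L2 V), f.2⟩ : L2 V)
      map_add' := by
        intro f g
        apply Subtype.ext
        have h2 : L ⇑((f : L2 V) + (g : L2 V)) = L ⇑(f : L2 V) + L ⇑(g : L2 V) := by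
          rw [lp.coeFn_add, map_add]
        simp only [Submodule.coe_add]
        rw [h2]
        rfl
      map_smul' := by
        intro c f
        apply Subtype.ext
        have h2 : L ⇑(c • (f : L2 V)) = c • L ⇑(f : L2 V) := by
          rw [lp.coeFn_smul, _root_.map_smul]
        simp only [Submodule.coe_smul]
        rw [h2]
        rfl }

end Shift
/-! ### Directed trees -/

/-- A directed tree: a directed graph which is connected (as an undirected graph), has no
circuits, and in which every vertex has at most one parent. -/
structure DirTree (V : Type*) where
  edge : V → V → Prop
  connected : ∀ u v : V, Relation.ReflTransGen (fun a b => edge a b ∨ edge b a) u v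
  noCircuit : ∀ v : V, ¬ Relation.TransGen edge v v
  uniqueParent : ∀ ⦃u₁ u₂ v : V⦄, edge u₁ v → edge u₂ v → u₁ = u₂

namespace DirTree

variable {V : Type*} (T : DirTree V)

/-- `v ∈ V°`, i.e. `v` is not a root. -/
def HasParent (v : V) : Prop := ∃ u, T.edge u v

/-- The parent of `v`, as an `Option`-valued function. -/
noncomputable def parOpt (v : V) : Option V :=
  if h : T.HasParent v then some h.choose else none

/-- The parent of `v` (junk value `v` itself if `v` is a root). -/
noncomputable def par (v : V) : V := (T.parOpt v).getD v

/-- The set of children of `u`. -/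
def Chi (u : V) : Set V := {v | T.edge u v}

/-- The set of descendants of `u`. -/
def Des (u : V) : Set V := {w | ∃ n : ℕ, T.par^[n] w = u}

/-- The formal action `Λ_T` of the weighted shift on `T` with weights `w`. -/
noncomputable def lamT (w : V → ℂ) : (V → ℂ) →ₗ[ℂ] (V → ℂ) := lamOf T.parOpt w

/-- The weighted shift `S_λ` on the directed tree `T`, as an unbounded operator in `ℓ²(V)`. -/
noncomputable def shift (w : V → ℂ) : L2 V →ₗ.[ℂ] L2 V := pmOf (T.lamT w)

/-- `u` is a Stieltjes vertex with respect to the weighted shift on `T` with weights `w`. -/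
noncomputable def StieltjesVertex (w : V → ℂ) (u : V) : Prop :=
  eMemDomInf (T.lamT w) u ∧ IsStieltjesMomentSeq (momSeqL (T.lamT w) u)

/-- The parent function of the subtree induced on a subset `A ⊆ V` : the parent of `v ∈ A`
inside `A`, if it exists. -/
noncomputable def parOptSub (A : Set V) (v : A) : Option A :=
  match T.parOpt v.1 with
  | none => none
  | some u => if h : u ∈ A then some ⟨u, h⟩ else none

/-- The restriction `S_λ|_{ℓ²(A)}` of a weighted shift to the (invariant) subspace `ℓ²(A)`,
regarded as an operator in the Hilbert space `ℓ²(A)`. -/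
noncomputable def shiftRes (w : V → ℂ) (A : Set V) : L2 A →ₗ.[ℂ] L2 A :=
  pmOf (lamOf (T.parOptSub A) fun v => w v.1)

end DirTree

/-! ### Classical weighted shifts -/

/-- parent function for the directed tree `(ℤ₊, {(n, n+1)})` of the unilateral shift -/
def uniPar : ℕ → Option ℕ
  | 0 => none
  | n + 1 => some n

/-- the formal action of the unilateral weighted shift: `(Λ f)(n+1) = λ_{n+1} f(n)`. -/
def uniLam (lam : ℕ → ℂ) : (ℕ → ℂ) →ₗ[ℂ] (ℕ → ℂ) := lamOf uniPar lam

/-- parent function for the directed tree `(ℤ, {(n, n+1)})` of the bilateral shift -/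
def bilPar : ℤ → Option ℤ := fun n => some (n - 1)

/-- the formal action of the bilateral weighted shift: `(Λ f)(n) = λ_n f(n-1)`. -/
def bilLam (lam : ℤ → ℂ) : (ℤ → ℂ) →ₗ[ℂ] (ℤ → ℂ) := lamOf bilPar lam

/-- `t` is a two-sided Stieltjes moment sequence: there is a positive Borel measure on `(0,∞)`
with `∫ sⁿ dμ = t n` for all `n ∈ ℤ`. -/
def IsTwoSidedStieltjesMomentSeq (t : ℤ → ℝ) : Prop :=
  (∀ n, 0 ≤ t n) ∧ ∃ μ : Measure ℝ,
    μ (Set.Iic 0) = 0 ∧ ∀ n : ℤ, ∫⁻ s, ENNReal.ofReal s ^ n ∂μ = ENNReal.ofReal (t n)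

/-! ### The directed trees `𝒯_{η,κ}` -/

/-- `J_ι = {k ∈ ℕ : 1 ≤ k ≤ ι}`, as a type. -/
abbrev Jt (ι : ℕ∞) := {k : ℕ // 1 ≤ k ∧ (k : ℕ∞) ≤ ι}

/-- The vertex set `V_{η,κ}` of the directed tree `𝒯_{η,κ}` :
`Sum.inl ⟨m, _⟩` is the vertex `-m` (for `m ∈ ℕ`, `m ≤ κ`) and `Sum.inr (i, j)` is the vertex
`(i, j)` (for `i ∈ J_η`, `j ≥ 1`). -/
abbrev VT (η κ : ℕ∞) := {m : ℕ // (m : ℕ∞) ≤ κ} ⊕ (Jt η × {j : ℕ // 1 ≤ j})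

/-- The parent function of the tree `𝒯_{η,κ}` : the parent of `-m` is `-(m+1)` (if `m+1 ≤ κ`;
the vertex `-κ` is the root), the parent of `(i,1)` is `0`, and the parent of `(i,j+1)`
is `(i,j)`. -/
def parEK (η κ : ℕ∞) : VT η κ → Option (VT η κ)
  | .inl ⟨m, _⟩ =>
      if h : ((m + 1 : ℕ) : ℕ∞) ≤ κ then some (.inl ⟨m + 1, h⟩) else none
  | .inr (i, ⟨j, _⟩) =>
      if h : 2 ≤ j then some (.inr (i, ⟨j - 1, by omega⟩))
      else some (.inl ⟨0, zero_le⟩)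

/-- The weight attached to a vertex of `𝒯_{η,κ}` : `lamC m` is the weight `λ_{-m}` and
`lamB i j` is the weight `λ_{i,j}`. -/
def wtEK {η κ : ℕ∞} (lamC : ℕ → ℂ) (lamB : Jt η → ℕ → ℂ) : VT η κ → ℂ
  | .inl ⟨m, _⟩ => lamC m
  | .inr (i, ⟨j, _⟩) => lamB i j

/-- The formal action of the weighted shift on `𝒯_{η,κ}` with weights `λ_{-m} = lamC m`,
`λ_{i,j} = lamB i j`. -/
def ekLam (η κ : ℕ∞) (lamC : ℕ → ℂ) (lamB : Jt η → ℕ → ℂ) :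
    (VT η κ → ℂ) →ₗ[ℂ] (VT η κ → ℂ) := lamOf (parEK η κ) (wtEK lamC lamB)

/-- The weighted shift `S_λ` on `𝒯_{η,κ}`, as an unbounded operator in `ℓ²(V_{η,κ})`. -/
def ekShift (η κ : ℕ∞) (lamC : ℕ → ℂ) (lamB : Jt η → ℕ → ℂ) :
    L2 (VT η κ) →ₗ.[ℂ] L2 (VT η κ) := pmOf (ekLam η κ lamC lamB)

/-- The branching vertex `0` of `𝒯_{η,κ}`. -/
def v0 (η κ : ℕ∞) : VT η κ := Sum.inl ⟨0, zero_le⟩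

/-- The vertex `-m` of `𝒯_{η,κ}`. -/
def vC (η : ℕ∞) {κ : ℕ∞} (m : ℕ) (hm : (m : ℕ∞) ≤ κ) : VT η κ := Sum.inl ⟨m, hm⟩

/-- The vertex `(i, j)` of `𝒯_{η,κ}`. -/
def vB {η : ℕ∞} (κ : ℕ∞) (i : Jt η) (j : ℕ) (hj : 1 ≤ j) : VT η κ := Sum.inr (i, ⟨j, hj⟩)

/-- The nonzero-weights condition for `𝒯_{η,κ}` : all weights attached to non-root vertices
are nonzero. -/
def ekNonzero (η κ : ℕ∞) (lamC : ℕ → ℂ) (lamB : Jt η → ℕ → ℂ) : Prop :=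
  (∀ m : ℕ, ((m + 1 : ℕ) : ℕ∞) ≤ κ → lamC m ≠ 0) ∧ ∀ (i : Jt η) (j : ℕ), 1 ≤ j → lamB i j ≠ 0

/-- `∫_0^∞ s^{-m} dμ(s)` (with values in `[0,∞]`, and the convention `0⁻¹ = ∞`). -/
def invMom (μ : Measure ℝ) (m : ℕ) : ℝ≥0∞ := ∫⁻ s, (ENNReal.ofReal s ^ m)⁻¹ ∂μ

/-- `∫_σ s^{-m} dμ(s)`. -/
def invMomOn (μ : Measure ℝ) (m : ℕ) (σ : Set ℝ) : ℝ≥0∞ := ∫⁻ s in σ, (ENNReal.ofReal s ^ m)⁻¹ ∂μ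

/-- `∫_0^∞ sⁿ dμ(s)`. -/
def powMom (μ : Measure ℝ) (n : ℕ) : ℝ≥0∞ := ∫⁻ s, ENNReal.ofReal s ^ n ∂μ

/-- `∫_σ sⁿ dμ(s)`. -/
def powMomOn (μ : Measure ℝ) (n : ℕ) (σ : Set ℝ) : ℝ≥0∞ := ∫⁻ s in σ, ENNReal.ofReal s ^ n ∂μ

/-- `|z|²` as an extended nonnegative real. -/
def nsq (z : ℂ) : ℝ≥0∞ := ENNReal.ofReal (‖z‖ ^ 2)

/-- `∑_{i ∈ J_η} |λ_{i,1}|² ∫_0^∞ s^{-m} dμ_i(s)`. -/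
def branchSum (η : ℕ∞) (lamB : Jt η → ℕ → ℂ) (μ : Jt η → Measure ℝ) (m : ℕ) : ℝ≥0∞ :=
  ∑' i : Jt η, nsq (lamB i 1) * invMom (μ i) m

/-- `∑_{i ∈ J_η} |λ_{i,1}|² ∫_σ s^{-m} dμ_i(s)`. -/
def branchSumOn (η : ℕ∞) (lamB : Jt η → ℕ → ℂ) (μ : Jt η → Measure ℝ) (m : ℕ) (σ : Set ℝ) :
    ℝ≥0∞ :=
  ∑' i : Jt η, nsq (lamB i 1) * invMomOn (μ i) m σ

/-- `{μ_i}_{i ∈ J_η}` is a system of Borel probability measures on `[0,∞)` satisfying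
`∫_0^∞ sⁿ dμ_i(s) = |λ_{i,2} ⋯ λ_{i,n+1}|²` for all `n ≥ 1` (condition (3.1) of the theorem). -/
def ekMomCond (η : ℕ∞) (lamB : Jt η → ℕ → ℂ) (μ : Jt η → Measure ℝ) : Prop :=
  (∀ i, IsProbOnRplus (μ i)) ∧
    ∀ (i : Jt η) (n : ℕ), 1 ≤ n →
      powMom (μ i) n = ENNReal.ofReal (‖∏ j ∈ Finset.Icc 2 (n + 1), lamB i j‖ ^ 2)

/-- `|λ_0 λ_{-1} ⋯ λ_{-(l-1)}|²` as an extended nonnegative real. -/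
def chainProdSq (lamC : ℕ → ℂ) (l : ℕ) : ℝ≥0∞ := nsq (∏ j ∈ Finset.range l, lamC j)

/-- The sequence `n ↦ ∑_{i ∈ J_η} |λ_{i,1} ⋯ λ_{i,n+1}|²` (which equals `‖S_λ^{n+1} e_0‖²`). -/
def ekBaseSeq (η : ℕ∞) (lamB : Jt η → ℕ → ℂ) (n : ℕ) : ℝ :=
  ∑' i : Jt η, ‖∏ j ∈ Finset.Icc 1 (n + 1), lamB i j‖ ^ 2

/-- The set of children of a vertex of `𝒯_{η,κ}`. -/
def ekChi (η κ : ℕ∞) (u : VT η κ) : Set (VT η κ) := {v | parEK η κ v = some u}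

section SCDHelpers

/-- Scaling a representing measure. -/
lemma isRepMeasure_smul {μ : Measure ℝ} {t : ℕ → ℝ} {c : ℝ} (hc : 0 ≤ c)
    (h : IsRepMeasure μ t) :
    IsRepMeasure (ENNReal.ofReal c • μ) (fun n => c * t n) := by
  refine ⟨?_, fun n => ?_⟩
  · simp [Measure.smul_apply, h.1]
  · rw [lintegral_smul_measure, h.2 n, ENNReal.ofReal_mul hc, smul_eq_mul]

lemma isDeterminateStieltjes_smul {t : ℕ → ℝ} {c : ℝ} (hc : 0 < c)
    (h : IsDeterminateStieltjes t) :
    IsDeterminateStieltjes (fun n => c * t n) := by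
  obtain ⟨hpos, ν, hν, huniq⟩ := h
  have hcc : ENNReal.ofReal c * ENNReal.ofReal c⁻¹ = 1 := by
    rw [← ENNReal.ofReal_mul hc.le, mul_inv_cancel₀ hc.ne', ENNReal.ofReal_one]
  refine ⟨fun n => mul_nonneg hc.le (hpos n), ENNReal.ofReal c • ν,
    isRepMeasure_smul hc.le hν, fun μ hμ => ?_⟩
  have h1 : IsRepMeasure (ENNReal.ofReal c⁻¹ • μ) t := by
    have := isRepMeasure_smul (c := c⁻¹) (inv_nonneg.mpr hc.le) hμ
    have heq : (fun n => c⁻¹ * (c * t n)) = t := by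
      funext n; rw [inv_mul_cancel_left₀ hc.ne']
    rwa [heq] at this
  have h2 : ENNReal.ofReal c⁻¹ • μ = ν := huniq _ h1
  calc μ = (ENNReal.ofReal c * ENNReal.ofReal c⁻¹) • μ := by rw [hcc, one_smul]
    _ = ENNReal.ofReal c • (ENNReal.ofReal c⁻¹ • μ) := by rw [smul_smul]
    _ = ENNReal.ofReal c • ν := by rw [h2]

/-- Multiplying a representing measure by the density `s` represents the shifted sequence. -/
lemma isRepMeasure_withDensity {μ : Measure ℝ} {t : ℕ → ℝ} (h : IsRepMeasure μ t) :
    IsRepMeasure (μ.withDensity fun s => ENNReal.ofReal s) (fun n => t (n + 1)) := by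
  have hm : Measurable fun s : ℝ => ENNReal.ofReal s := ENNReal.measurable_ofReal
  refine ⟨?_, fun n => ?_⟩
  · rw [withDensity_apply _ measurableSet_Iio, Measure.restrict_eq_zero.2 h.1,
      lintegral_zero_measure]
  · rw [lintegral_withDensity_eq_lintegral_mul _ hm (hm.pow_const n)]
    have heq : (fun s : ℝ => ENNReal.ofReal s) * (fun s => ENNReal.ofReal s ^ n)
        = fun s => ENNReal.ofReal s ^ (n + 1) := by
      funext s; simp [pow_succ, mul_comm]
    rw [heq, h.2 (n + 1)]

/-- Two representing measures of the same sequence with equal `s`-densities are equal. -/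
lemma rep_eq_of_withDensity_eq {μ₁ μ₂ : Measure ℝ} {t : ℕ → ℝ}
    (h₁ : IsRepMeasure μ₁ t) (h₂ : IsRepMeasure μ₂ t)
    (h : μ₁.withDensity (fun s => ENNReal.ofReal s)
        = μ₂.withDensity (fun s => ENNReal.ofReal s)) :
    μ₁ = μ₂ := by
  set f : ℝ → ℝ≥0∞ := fun s => ENNReal.ofReal s with hf
  have hm : Measurable f := ENNReal.measurable_ofReal
  have hind : ∀ s : ℝ, f s * (f s)⁻¹ = (Set.Ioi (0:ℝ)).indicator 1 s := by
    intro s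
    by_cases hs : 0 < s
    · rw [ENNReal.mul_inv_cancel (by simpa [hf] using (ENNReal.ofReal_pos.2 hs).ne')
        ENNReal.ofReal_ne_top]
      exact (Set.indicator_of_mem (Set.mem_Ioi.mpr hs) 1).symm
    · have : f s = 0 := by simp [hf, ENNReal.ofReal_eq_zero, le_of_not_gt hs]
      rw [this, zero_mul]
      exact (Set.indicator_of_notMem (by simpa using hs) 1).symm
  have key : ∀ (μ : Measure ℝ) (A : Set ℝ), MeasurableSet A →
      (μ.withDensity f).withDensity (fun s => (f s)⁻¹) A = μ (A ∩ Set.Ioi 0) := by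
    intro μ A hA
    rw [← withDensity_mul μ hm (show Measurable fun s => (f s)⁻¹ from hm.inv), withDensity_apply _ hA]
    calc ∫⁻ s in A, (f * fun s => (f s)⁻¹) s ∂μ
        = ∫⁻ s in A, (Set.Ioi (0:ℝ)).indicator 1 s ∂μ := by
          refine lintegral_congr fun s => ?_
          simpa using hind s
      _ = (μ.restrict A) (Set.Ioi 0) := lintegral_indicator_one measurableSet_Ioi
      _ = μ (Set.Ioi 0 ∩ A) := Measure.restrict_apply measurableSet_Ioi
      _ = μ (A ∩ Set.Ioi 0) := by rw [Set.inter_comm]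
  have hIoi : ∀ A : Set ℝ, MeasurableSet A → μ₁ (A ∩ Set.Ioi 0) = μ₂ (A ∩ Set.Ioi 0) := by
    intro A hA
    rw [← key μ₁ A hA, ← key μ₂ A hA, h]
  have huniv : ∀ μ : Measure ℝ, IsRepMeasure μ t → μ Set.univ = ENNReal.ofReal (t 0) := by
    intro μ hμ
    have := hμ.2 0
    simpa using this
  have hfin : μ₂ (Set.Ioi (0:ℝ)) ≠ ∞ := by
    refine ne_top_of_le_ne_top (b := ENNReal.ofReal (t 0)) ENNReal.ofReal_ne_top ?_
    rw [← huniv μ₂ h₂]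
    exact measure_mono (Set.subset_univ _)
  have hsplit : ∀ μ : Measure ℝ, IsRepMeasure μ t →
      μ {(0:ℝ)} + μ (Set.Ioi 0) = ENNReal.ofReal (t 0) := by
    intro μ hμ
    have h0 : μ (Set.Ici (0:ℝ)) = μ Set.univ := by
      have hu : (Set.univ : Set ℝ) = Set.Iio 0 ∪ Set.Ici 0 := (Set.Iio_union_Ici).symm
      rw [hu, measure_union (Set.Iio_disjoint_Ici le_rfl) measurableSet_Ici, hμ.1, zero_add]
    have h1 : μ (Set.Ici (0:ℝ)) = μ {(0:ℝ)} + μ (Set.Ioi 0) := by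
      rw [← Set.Ioi_insert, Set.insert_eq,
        measure_union (by simp [Set.disjoint_singleton_left]) measurableSet_Ioi]
    rw [← h1, h0, huniv μ hμ]
  have hzero : μ₁ {(0:ℝ)} = μ₂ {(0:ℝ)} := by
    have e1 := hsplit μ₁ h₁
    have e2 := hsplit μ₂ h₂
    have e3 : μ₁ (Set.Ioi (0:ℝ)) = μ₂ (Set.Ioi (0:ℝ)) := by
      have := hIoi Set.univ MeasurableSet.univ
      simpa [Set.univ_inter] using this
    rw [e3, ← e2] at e1
    exact WithTop.add_right_cancel hfin e1
  ext A hA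
  have hdecomp : ∀ μ : Measure ℝ, IsRepMeasure μ t →
      μ A = μ (A ∩ {(0:ℝ)}) + μ (A ∩ Set.Ioi 0) := by
    intro μ hμ
    have hAle : μ A = μ (A ∩ Set.Ici 0) := by
      refine le_antisymm ?_ (measure_mono Set.inter_subset_left)
      calc μ A = μ ((A ∩ Set.Ici 0) ∪ (A ∩ Set.Iio 0)) := by
            rw [← Set.inter_union_distrib_left, Set.union_comm, Set.Iio_union_Ici,
              Set.inter_univ]
        _ ≤ μ (A ∩ Set.Ici 0) + μ (A ∩ Set.Iio 0) := measure_union_le _ _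
        _ ≤ μ (A ∩ Set.Ici 0) + μ (Set.Iio 0) :=
            add_le_add le_rfl (measure_mono Set.inter_subset_right)
        _ = μ (A ∩ Set.Ici 0) := by rw [hμ.1, add_zero]
    have hIci : A ∩ Set.Ici 0 = (A ∩ {(0:ℝ)}) ∪ (A ∩ Set.Ioi 0) := by
      rw [← Set.inter_union_distrib_left, ← Set.Ioi_insert, Set.insert_eq]
    rw [hAle, hIci, measure_union ?_ (hA.inter measurableSet_Ioi)]
    exact Set.disjoint_of_subset Set.inter_subset_right Set.inter_subset_right
      (by simp [Set.disjoint_singleton_left])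
  rw [hdecomp μ₁ h₁, hdecomp μ₂ h₂, hIoi A hA]
  by_cases h0A : (0:ℝ) ∈ A
  · rw [Set.inter_eq_self_of_subset_right (Set.singleton_subset_iff.2 h0A), hzero]
  · rw [Set.inter_singleton_eq_empty.mpr h0A]
    simp

/-- The one-step recurrence for the moment sequence at a vertex with a single child. -/
lemma momSeqL_succ {V : Type} (T : DirTree V) (lam : V → ℂ) (u w : V)
    (hchi : T.Chi u = {w}) (n : ℕ) :
    momSeqL (T.lamT lam) u (n + 1) = ‖lam w‖ ^ 2 * momSeqL (T.lamT lam) w n := by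
  have hpar : ∀ v : V, T.parOpt v = some u ↔ v = w := by
    intro v
    constructor
    · intro hv
      unfold DirTree.parOpt at hv
      split_ifs at hv with hP
      · have hc : hP.choose = u := by simpa using hv
        have : T.edge u v := hc ▸ hP.choose_spec
        have : v ∈ T.Chi u := this
        rwa [hchi, Set.mem_singleton_iff] at this
    · intro hvw
      have hew : T.edge u v := by
        have : v ∈ T.Chi u := by rw [hchi, Set.mem_singleton_iff]; exact hvw
        exact this
      have hP : T.HasParent v := ⟨u, hew⟩
      unfold DirTree.parOpt
      rw [dif_pos hP]
      exact congrArg some (T.uniqueParent hP.choose_spec hew)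
  have hstep : (T.lamT lam) (eV u) = lam w • eV w := by
    funext v
    show ((T.parOpt v).map fun p => lam v * eV u p).getD 0 = lam w • eV w v
    rcases hop : T.parOpt v with _ | p
    · have hvw : v ≠ w := fun hvw => by
        rw [(hpar v).mpr hvw] at hop; exact absurd hop (Option.some_ne_none _)
      simp [eV, hvw, Pi.smul_apply]
    · by_cases hp : p = u
      · subst hp
        have hvw : v = w := (hpar v).mp hop
        subst hvw
        simp [eV, Pi.smul_apply, smul_eq_mul]
      · have hvw : v ≠ w := fun hvw =>
          hp (Option.some.inj (hop.symm.trans ((hpar v).mpr hvw)))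
        simp [eV, hp, hvw, Pi.smul_apply]
  have hiter : ∀ (g : V → ℂ) (c : ℂ), (⇑(T.lamT lam))^[n] (c • g)
      = c • (⇑(T.lamT lam))^[n] g := by
    intro g c
    rw [← Module.End.pow_apply, ← Module.End.pow_apply]
    exact _root_.map_smul _ c g
  unfold momSeqL
  rw [Function.iterate_succ_apply, hstep, hiter]
  rw [← tsum_mul_left]
  refine tsum_congr fun v => ?_
  rw [Pi.smul_apply, smul_eq_mul, norm_mul, mul_pow]

end SCDHelpers

/-- Lemma 2(ii). -/
theorem weightedShift_singleChild_determinate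
    {V : Type} (T : DirTree V) (lam : V → ℂ) (u w : V)
    (hchi : T.Chi u = {w}) (hw : lam w ≠ 0)
    (hu : T.StieltjesVertex lam u)
    (hdet : IsDeterminateStieltjes (momSeqL (T.lamT lam) w)) :
    IsDeterminateStieltjes (momSeqL (T.lamT lam) u) ∧
      IsDeterminateStieltjes (fun n => momSeqL (T.lamT lam) u (n + 1)) := by
  have hc : (0:ℝ) < ‖lam w‖ ^ 2 := pow_pos (norm_pos_iff.mpr hw) 2
  have hshift : (fun n => momSeqL (T.lamT lam) u (n + 1))
      = fun n => ‖lam w‖ ^ 2 * momSeqL (T.lamT lam) w n := by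
    funext n; exact momSeqL_succ T lam u w hchi n
  have hdet' : IsDeterminateStieltjes (fun n => momSeqL (T.lamT lam) u (n + 1)) := by
    rw [hshift]
    exact isDeterminateStieltjes_smul hc hdet
  refine ⟨⟨hu.2.1, ?_⟩, hdet'⟩
  obtain ⟨hpos, μ, hμ⟩ := hu.2
  refine ⟨μ, hμ, fun ν hν => ?_⟩
  have hd1 : IsRepMeasure (ν.withDensity fun s => ENNReal.ofReal s)
      (fun n => momSeqL (T.lamT lam) u (n + 1)) := isRepMeasure_withDensity hν
  have hd2 : IsRepMeasure (μ.withDensity fun s => ENNReal.ofReal s)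
      (fun n => momSeqL (T.lamT lam) u (n + 1)) := isRepMeasure_withDensity hμ
  obtain ⟨-, ρ, hρ, huniq⟩ := hdet'
  exact rep_eq_of_withDensity_eq hν hμ ((huniq _ hd1).trans (huniq _ hd2).symm)
end
end

section
/- Let 0 < κ < ∞, let η ∈ {2, 3, …} ∪ {∞}, let {λ_{i,1}}_{i∈J_η} and {λ_{−j}}_{j=0}^{κ−1} be nonzero complex numbers, and let {μ_i}_{i∈J_η} be a sequence of Borel probability measures on [0, ∞). Then the following two conditions are equivalent: (A) ∑_{i∈J_η} |λ_{i,1}|² ∫_0^∞ (1/s) dμ_i(s) = 1, |∏_{j=0}^{l−1} λ_{−j}|² ∑_{i∈J_η} |λ_{i,1}|² ∫_0^∞ s^{−(l+1)} dμ_i(s) = 1 for every l ∈ J_{κ−1}, and |∏_{j=0}^{κ−1} λ_{−j}|² ∑_{i∈J_η} |λ_{i,1}|² ∫_0^∞ s^{−(κ+1)} dμ_i(s) ≤ 1; (B) there exists a Borel probability measure ν on [0, ∞) such that ∫_0^∞ sⁿ dν(s) = |∏_{j=κ−n}^{κ−1} λ_{−j}|² for every n ∈ J_κ and ∫_σ s^κ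 dν(s) = |∏_{j=0}^{κ−1} λ_{−j}|² ∑_{i∈J_η} |λ_{i,1}|² ∫_σ (1/s) dμ_i(s) for every Borel subset σ of [0, ∞). -/
open MeasureTheory ENNReal Set
open scoped Classical

noncomputable section

universe u

section EkAux

private lemma nsq_ne_zero' {z : ℂ} (h : z ≠ 0) : nsq z ≠ 0 := by
  rw [nsq, Ne, ENNReal.ofReal_eq_zero, not_le]
  exact pow_pos (norm_pos_iff.mpr h) 2

private lemma nsq_ne_top' (z : ℂ) : nsq z ≠ ∞ := ENNReal.ofReal_ne_top

private lemma nsq_mul' (z w : ℂ) : nsq (z * w) = nsq z * nsq w := by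
  rw [nsq, nsq, nsq, ← ENNReal.ofReal_mul (by positivity)]
  congr 1
  rw [norm_mul, mul_pow]

private lemma meas_powinv (m : ℕ) : Measurable fun s : ℝ => (ENNReal.ofReal s ^ m)⁻¹ :=
  (ENNReal.measurable_ofReal.pow_const m).inv

private lemma meas_pow (m : ℕ) : Measurable fun s : ℝ => ENNReal.ofReal s ^ m :=
  ENNReal.measurable_ofReal.pow_const m

/-- If `μ` lives on `[0,∞)` and `∫ s⁻¹ dμ < ∞`, then `μ`-a.e. `0 < s`. -/
private lemma ae_pos_of_invMom {μ : Measure ℝ} (h0 : μ (Set.Iio 0) = 0)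
    (hfin : invMom μ 1 ≠ ∞) : ∀ᵐ s ∂μ, 0 < s := by
  have hz : μ {(0 : ℝ)} = 0 := by
    by_contra hne
    have h1 : ∫⁻ s in {(0 : ℝ)}, (ENNReal.ofReal s ^ 1)⁻¹ ∂μ ≤ invMom μ 1 :=
      setLIntegral_le_lintegral _ _
    have h2 : ∫⁻ s in {(0 : ℝ)}, (ENNReal.ofReal s ^ 1)⁻¹ ∂μ = ∞ * μ {(0 : ℝ)} := by
      have e1 : ∀ s ∈ ({(0 : ℝ)} : Set ℝ), (ENNReal.ofReal s ^ 1)⁻¹ = (⊤ : ℝ≥0∞) := by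
        intro s hs
        rw [Set.mem_singleton_iff] at hs
        subst hs
        simp
      rw [setLIntegral_congr_fun (measurableSet_singleton 0) e1,
        setLIntegral_const]
    rw [h2, ENNReal.top_mul hne] at h1
    exact hfin (top_le_iff.mp h1)
  have : μ (Set.Iic 0) = 0 := by
    have : μ (Set.Iic 0) ≤ μ (Set.Iio 0) + μ {(0 : ℝ)} := by
      rw [← Set.Iio_union_right]; exact measure_union_le _ _
    simpa [h0, hz] using this
  rw [Filter.eventually_iff, mem_ae_iff]
  convert this using 2
  ext s
  simp [not_lt]

/-- splitting of the weight product -/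
private lemma prod_split (c : ℕ → ℂ) (l : ℕ) {κ : ℕ} (hl : l ≤ κ) (hκ : 1 ≤ κ) :
    (∏ j ∈ Finset.range κ, c j) =
      (∏ j ∈ Finset.range l, c j) * ∏ j ∈ Finset.Icc l (κ - 1), c j := by
  have h1 : Finset.Icc l (κ - 1) = Finset.Ico l κ := by
    ext j; simp only [Finset.mem_Icc, Finset.mem_Ico]; omega
  rw [h1, Finset.range_eq_Ico, Finset.range_eq_Ico]
  exact (Finset.prod_Ico_consecutive c (Nat.zero_le l) hl).symm

private lemma Icc_zero_eq_range {κ : ℕ} (hκ : 1 ≤ κ) :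
    Finset.Icc 0 (κ - 1) = Finset.range κ := by
  ext j; simp only [Finset.mem_Icc, Finset.mem_range]; omega

/-- For `0 < s` and `n ≤ m` : `s^n * (s^m)⁻¹ = (s^(m-n))⁻¹`. -/
private lemma pow_mul_inv_pow {s : ℝ} (hs : 0 < s) {n m : ℕ} (h : n ≤ m) :
    ENNReal.ofReal s ^ n * (ENNReal.ofReal s ^ m)⁻¹ = (ENNReal.ofReal s ^ (m - n))⁻¹ := by
  set x := ENNReal.ofReal s with hx
  have hx0 : x ≠ 0 := by simp [hx, hs.le, hs]
  have hxt : x ≠ ∞ := ENNReal.ofReal_ne_top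
  have hm : x ^ m = x ^ n * x ^ (m - n) := by rw [← pow_add]; congr 1; omega
  rw [hm, ENNReal.mul_inv (Or.inl (pow_ne_zero n hx0)) (Or.inr (pow_ne_zero _ hx0)),
    ← mul_assoc, ENNReal.mul_inv_cancel (pow_ne_zero n hx0) (ENNReal.pow_ne_top hxt), one_mul]

/-- Pointwise: `(s^a)⁻¹ * (s^b)⁻¹ = (s^(a+b))⁻¹` when `a ≥ 1`. -/
private lemma inv_pow_mul_inv_pow (s : ℝ) {a : ℕ} (ha : 1 ≤ a) (b : ℕ) :
    (ENNReal.ofReal s ^ a)⁻¹ * (ENNReal.ofReal s ^ b)⁻¹ = (ENNReal.ofReal s ^ (a + b))⁻¹ := by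
  rcases lt_or_ge 0 s with hs | hs
  · set x := ENNReal.ofReal s with hx
    have hx0 : x ≠ 0 := by simp [hx, hs.le, hs]
    rw [pow_add, ENNReal.mul_inv (Or.inl (pow_ne_zero a hx0)) (Or.inr (pow_ne_zero _ hx0))]
  · have hx : ENNReal.ofReal s = 0 := by simpa using hs
    rw [hx, zero_pow (by omega : a ≠ 0), zero_pow (by omega : a + b ≠ 0), ENNReal.inv_zero]
    rcases Nat.eq_zero_or_pos b with hb | hb
    · simp [hb]
    · rw [zero_pow (by omega : b ≠ 0), ENNReal.inv_zero, ENNReal.top_mul_top]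

/-- Pointwise: `(s^κ)⁻¹ * s^κ` is the indicator of `(0,∞)` when `κ ≥ 1`. -/
private lemma inv_pow_mul_pow_self {κ : ℕ} (hκ : 1 ≤ κ) (s : ℝ) :
    (ENNReal.ofReal s ^ κ)⁻¹ * ENNReal.ofReal s ^ κ =
      (Set.Ioi (0 : ℝ)).indicator (fun _ => 1) s := by
  rcases lt_or_ge 0 s with hs | hs
  · have hx0 : ENNReal.ofReal s ^ κ ≠ 0 := pow_ne_zero κ (by simp [hs.le, hs])
    have hxt : ENNReal.ofReal s ^ κ ≠ ∞ :=
      ENNReal.pow_ne_top (ENNReal.ofReal_ne_top (r := s))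
    rw [ENNReal.inv_mul_cancel hx0 hxt, Set.indicator_of_mem (Set.mem_Ioi.mpr hs)]
  · have hx : ENNReal.ofReal s = 0 := by simpa using hs
    rw [hx, zero_pow (by omega : κ ≠ 0), mul_zero]
    exact (Set.indicator_of_notMem (by simpa using hs) _).symm

/-- Pointwise: `(s^a)⁻¹ * s^κ = s^(κ-a)` when `a ≤ κ`, `1 ≤ κ - a`. -/
private lemma inv_pow_mul_pow {a κ : ℕ} (haκ : a ≤ κ) (h1 : 1 ≤ κ - a) (s : ℝ) :
    (ENNReal.ofReal s ^ a)⁻¹ * ENNReal.ofReal s ^ κ = ENNReal.ofReal s ^ (κ - a) := by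
  rcases lt_or_ge 0 s with hs | hs
  · set x := ENNReal.ofReal s with hx
    have hx0 : x ≠ 0 := by simp [hx, hs.le, hs]
    have hxt : x ≠ ∞ := ENNReal.ofReal_ne_top
    have hm : x ^ κ = x ^ a * x ^ (κ - a) := by rw [← pow_add]; congr 1; omega
    rw [hm, ← mul_assoc, ENNReal.inv_mul_cancel (pow_ne_zero a hx0) (ENNReal.pow_ne_top hxt),
      one_mul]
  · have hx : ENNReal.ofReal s = 0 := by simpa using hs
    rw [hx, zero_pow (by omega : κ ≠ 0), zero_pow (by omega : κ - a ≠ 0), mul_zero]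

end EkAux

/-- equivalence of conditions (ii) and (iii). -/
theorem ekConditions_equiv
    (η : ℕ∞) (hη : 2 ≤ η) (κ : ℕ) (hκ : 1 ≤ κ)
    (a : Jt η → ℂ) (ha : ∀ i, a i ≠ 0)
    (c : ℕ → ℂ) (hc : ∀ j : ℕ, j < κ → c j ≠ 0)
    (μ : Jt η → Measure ℝ) (hμ : ∀ i, IsProbOnRplus (μ i)) :
    ((∑' i : Jt η, nsq (a i) * invMom (μ i) 1) = 1 ∧
      (∀ l : ℕ, 1 ≤ l → l ≤ κ - 1 →
        nsq (∏ j ∈ Finset.range l, c j) * ∑' i : Jt η, nsq (a i) * invMom (μ i) (l + 1) = 1) ∧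
      nsq (∏ j ∈ Finset.range κ, c j) *
        ∑' i : Jt η, nsq (a i) * invMom (μ i) (κ + 1) ≤ 1) ↔
    (∃ ν : Measure ℝ, IsProbOnRplus ν ∧
      (∀ n : ℕ, 1 ≤ n → n ≤ κ →
        powMom ν n = ENNReal.ofReal (‖∏ j ∈ Finset.Icc (κ - n) (κ - 1), c j‖ ^ 2)) ∧
      ∀ σ : Set ℝ, MeasurableSet σ →
        powMomOn ν κ σ = nsq (∏ j ∈ Finset.range κ, c j) *
          ∑' i : Jt η, nsq (a i) * invMomOn (μ i) 1 σ) := by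
  classical
  have hCprod : (∏ j ∈ Finset.range κ, c j) ≠ 0 :=
    Finset.prod_ne_zero_iff.mpr fun j hj => hc j (Finset.mem_range.mp hj)
  have hC0 : nsq (∏ j ∈ Finset.range κ, c j) ≠ 0 := nsq_ne_zero' hCprod
  have hCt : nsq (∏ j ∈ Finset.range κ, c j) ≠ ∞ := nsq_ne_top' _
  constructor
  · rintro ⟨h1, h2, h3⟩
    have hfin : ∀ i, invMom (μ i) 1 ≠ ∞ := by
      intro i ht
      have hle : nsq (a i) * invMom (μ i) 1 ≤ 1 :=
        le_trans (ENNReal.le_tsum i) (le_of_eq h1)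
      rw [ht, ENNReal.mul_top (nsq_ne_zero' (ha i))] at hle
      simp at hle
    have hpos : ∀ i, ∀ᵐ s ∂(μ i), 0 < s := fun i =>
      ae_pos_of_invMom (hμ i).2 (hfin i)
    set f : ℝ → ℝ≥0∞ := fun s => (ENNReal.ofReal s ^ (κ + 1))⁻¹ with hfdef
    set ξ : Measure ℝ := Measure.sum (fun i : Jt η => nsq (a i) • (μ i).withDensity f)
      with hξdef
    have hξs : ∀ σ : Set ℝ, MeasurableSet σ →
        ξ σ = ∑' i : Jt η, nsq (a i) * invMomOn (μ i) (κ + 1) σ := by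
      intro σ hσ
      rw [hξdef, Measure.sum_apply _ hσ]
      refine tsum_congr fun i => ?_
      rw [Measure.smul_apply, withDensity_apply _ hσ, smul_eq_mul]
      rfl
    have hξuniv : ξ Set.univ = ∑' i : Jt η, nsq (a i) * invMom (μ i) (κ + 1) := by
      rw [hξs _ MeasurableSet.univ]
      refine tsum_congr fun i => ?_
      rw [invMomOn, Measure.restrict_univ]
      rfl
    have hξle : nsq (∏ j ∈ Finset.range κ, c j) * ξ Set.univ ≤ 1 := by
      rw [hξuniv]; exact h3
    set ν : Measure ℝ := nsq (∏ j ∈ Finset.range κ, c j) • ξ +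
      (1 - nsq (∏ j ∈ Finset.range κ, c j) * ξ Set.univ) • Measure.dirac 0 with hνdef
    refine ⟨ν, ⟨⟨?_⟩, ?_⟩, ?_, ?_⟩
    · rw [hνdef, Measure.add_apply, Measure.smul_apply, Measure.smul_apply,
        Measure.dirac_apply' _ MeasurableSet.univ, smul_eq_mul, smul_eq_mul]
      simp only [Set.indicator_univ, Pi.one_apply, mul_one]
      exact add_tsub_cancel_of_le hξle
    · rw [hνdef, Measure.add_apply, Measure.smul_apply, Measure.smul_apply,
        Measure.dirac_apply' _ measurableSet_Iio, smul_eq_mul, smul_eq_mul]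
      have hξ0 : ξ (Set.Iio 0) = 0 := by
        rw [hξs _ measurableSet_Iio]
        refine ENNReal.tsum_eq_zero.mpr fun i => ?_
        rw [invMomOn, Measure.restrict_eq_zero.mpr (hμ i).2, lintegral_zero_measure, mul_zero]
      rw [hξ0, mul_zero, Set.indicator_of_notMem (by simp), mul_zero, add_zero]
    · intro n hn1 hnκ
      have hmain : powMom ν n = nsq (∏ j ∈ Finset.range κ, c j) *
          ∑' i : Jt η, nsq (a i) * invMom (μ i) (κ + 1 - n) := by
        rw [show powMom ν n = ∫⁻ s, ENNReal.ofReal s ^ n ∂ν from rfl, hνdef,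
          lintegral_add_measure, lintegral_smul_measure, lintegral_smul_measure,
          lintegral_dirac]
        rw [show ENNReal.ofReal (0 : ℝ) ^ n = 0 by
          rw [ENNReal.ofReal_zero, zero_pow (by omega : n ≠ 0)], smul_zero, add_zero,
          hξdef, lintegral_sum_measure]
        congr 1
        refine tsum_congr fun i => ?_
        rw [lintegral_smul_measure,
          lintegral_withDensity_eq_lintegral_mul _ (meas_powinv (κ + 1)) (meas_pow n)]
        congr 1
        rw [show invMom (μ i) (κ + 1 - n) =
          ∫⁻ s, (ENNReal.ofReal s ^ (κ + 1 - n))⁻¹ ∂(μ i) from rfl]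
        refine lintegral_congr_ae ((hpos i).mono fun s hs => ?_)
        simp only [Pi.mul_apply, hfdef]
        rw [mul_comm, pow_mul_inv_pow hs (by omega)]
      rcases eq_or_lt_of_le hnκ with heq | hlt
      · rw [hmain, show κ + 1 - n = 1 by omega, h1, mul_one,
          show κ - n = 0 by omega, Icc_zero_eq_range hκ]
        rfl
      · have hsplit : nsq (∏ j ∈ Finset.range κ, c j) =
            nsq (∏ j ∈ Finset.range (κ - n), c j) *
              nsq (∏ j ∈ Finset.Icc (κ - n) (κ - 1), c j) := by
          rw [prod_split c (κ - n) (by omega) hκ, nsq_mul']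
        have h2' := h2 (κ - n) (by omega) (by omega)
        rw [hmain, show κ + 1 - n = (κ - n) + 1 by omega]
        calc nsq (∏ j ∈ Finset.range κ, c j) *
              ∑' i : Jt η, nsq (a i) * invMom (μ i) ((κ - n) + 1)
            = nsq (∏ j ∈ Finset.Icc (κ - n) (κ - 1), c j) *
              (nsq (∏ j ∈ Finset.range (κ - n), c j) *
                ∑' i : Jt η, nsq (a i) * invMom (μ i) ((κ - n) + 1)) := by
              rw [hsplit]; ring
          _ = nsq (∏ j ∈ Finset.Icc (κ - n) (κ - 1), c j) := by rw [h2', mul_one]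
          _ = ENNReal.ofReal (‖∏ j ∈ Finset.Icc (κ - n) (κ - 1), c j‖ ^ 2) := rfl
    · intro σ hσ
      rw [show powMomOn ν κ σ = ∫⁻ s in σ, ENNReal.ofReal s ^ κ ∂ν from rfl, hνdef,
        Measure.restrict_add, Measure.restrict_smul, Measure.restrict_smul,
        lintegral_add_measure, lintegral_smul_measure, lintegral_smul_measure]
      have hdirac : ∫⁻ s in σ, ENNReal.ofReal s ^ κ ∂(Measure.dirac 0) = 0 := by
        refine le_antisymm (le_trans (setLIntegral_le_lintegral _ _) ?_) zero_le
        rw [lintegral_dirac]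
        rw [ENNReal.ofReal_zero, zero_pow (by omega : κ ≠ 0)]
      rw [hdirac, smul_zero, add_zero, hξdef, Measure.restrict_sum _ hσ,
        lintegral_sum_measure]
      congr 1
      refine tsum_congr fun i => ?_
      rw [Measure.restrict_smul, lintegral_smul_measure, restrict_withDensity hσ,
        lintegral_withDensity_eq_lintegral_mul _ (meas_powinv (κ + 1)) (meas_pow κ)]
      congr 1
      rw [show invMomOn (μ i) 1 σ = ∫⁻ s in σ, (ENNReal.ofReal s ^ 1)⁻¹ ∂(μ i) from rfl]
      refine lintegral_congr_ae ((ae_restrict_of_ae (hpos i)).mono fun s hs => ?_)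
      simp only [Pi.mul_apply, hfdef]
      rw [mul_comm, pow_mul_inv_pow hs (by omega), show κ + 1 - κ = 1 by omega]
  · rintro ⟨ν, ⟨hν1, hν2⟩, hmomν, hsetν⟩
    set g1 : ℝ → ℝ≥0∞ := fun s => (ENNReal.ofReal s ^ 1)⁻¹ with hg1def
    set ξ : Measure ℝ := Measure.sum (fun i : Jt η => nsq (a i) • (μ i).withDensity g1)
      with hξdef
    have key : ν.withDensity (fun s => ENNReal.ofReal s ^ κ) =
        nsq (∏ j ∈ Finset.range κ, c j) • ξ := by
      refine Measure.ext fun σ hσ => ?_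
      rw [withDensity_apply _ hσ, Measure.smul_apply, hξdef, Measure.sum_apply _ hσ,
        smul_eq_mul]
      rw [show (∫⁻ s in σ, ENNReal.ofReal s ^ κ ∂ν) = powMomOn ν κ σ from rfl, hsetν σ hσ]
      congr 1
      refine tsum_congr fun i => ?_
      rw [Measure.smul_apply, withDensity_apply _ hσ, smul_eq_mul]
      rfl
    have keyL : ∀ g : ℝ → ℝ≥0∞, Measurable g →
        ∫⁻ s, ((fun s => ENNReal.ofReal s ^ κ) * g) s ∂ν =
          nsq (∏ j ∈ Finset.range κ, c j) *
            ∑' i : Jt η, nsq (a i) * ∫⁻ s, (g1 * g) s ∂(μ i) := by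
      intro g hg
      rw [← lintegral_withDensity_eq_lintegral_mul ν (meas_pow κ) hg, key,
        lintegral_smul_measure, hξdef, lintegral_sum_measure]
      congr 1
      exact tsum_congr fun i => by
        rw [lintegral_smul_measure, smul_eq_mul, lintegral_withDensity_eq_lintegral_mul _ (meas_powinv 1) hg]
    have hmain : ∀ n : ℕ, 1 ≤ n → n ≤ κ →
        ENNReal.ofReal (‖∏ j ∈ Finset.Icc (κ - n) (κ - 1), c j‖ ^ 2) =
          nsq (∏ j ∈ Finset.range κ, c j) *
            ∑' i : Jt η, nsq (a i) * invMom (μ i) (κ - n + 1) := by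
      intro n hn1 hnκ
      have h := keyL (fun s => (ENNReal.ofReal s ^ (κ - n))⁻¹) (meas_powinv _)
      have hL : ∫⁻ s, ((fun s => ENNReal.ofReal s ^ κ) *
          fun s => (ENNReal.ofReal s ^ (κ - n))⁻¹) s ∂ν = powMom ν n := by
        rw [show powMom ν n = ∫⁻ s, ENNReal.ofReal s ^ n ∂ν from rfl]
        refine lintegral_congr fun s => ?_
        simp only [Pi.mul_apply]
        rw [mul_comm, inv_pow_mul_pow (by omega : κ - n ≤ κ) (by omega) s,
          Nat.sub_sub_self hnκ]
      rw [hL, hmomν n hn1 hnκ] at h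
      rw [h]
      congr 1
      refine tsum_congr fun i => ?_
      congr 1
      rw [show invMom (μ i) (κ - n + 1) =
        ∫⁻ s, (ENNReal.ofReal s ^ (κ - n + 1))⁻¹ ∂(μ i) from rfl]
      refine lintegral_congr fun s => ?_
      simp only [Pi.mul_apply, hg1def]
      rw [inv_pow_mul_inv_pow s le_rfl (κ - n), Nat.add_comm]
    refine ⟨?_, ?_, ?_⟩
    · have h := hmain κ hκ le_rfl
      rw [Nat.sub_self, Icc_zero_eq_range hκ, Nat.zero_add] at h
      have h' : nsq (∏ j ∈ Finset.range κ, c j) * 1 =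
          nsq (∏ j ∈ Finset.range κ, c j) *
            ∑' i : Jt η, nsq (a i) * invMom (μ i) 1 := by
        rw [mul_one]; exact h
      exact ((ENNReal.mul_right_inj hC0 hCt).mp h').symm
    · intro l hl1 hl2
      have h := hmain (κ - l) (by omega) (by omega)
      rw [Nat.sub_sub_self (by omega : l ≤ κ)] at h
      have hQ0 : nsq (∏ j ∈ Finset.Icc l (κ - 1), c j) ≠ 0 :=
        nsq_ne_zero' (Finset.prod_ne_zero_iff.mpr fun j hj => hc j (by
          simp only [Finset.mem_Icc] at hj; omega))
      have hQt : nsq (∏ j ∈ Finset.Icc l (κ - 1), c j) ≠ ∞ := nsq_ne_top' _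
      have hsplit : nsq (∏ j ∈ Finset.range κ, c j) =
          nsq (∏ j ∈ Finset.range l, c j) * nsq (∏ j ∈ Finset.Icc l (κ - 1), c j) := by
        rw [prod_split c l (by omega) hκ, nsq_mul']
      have h' : nsq (∏ j ∈ Finset.Icc l (κ - 1), c j) * 1 =
          nsq (∏ j ∈ Finset.Icc l (κ - 1), c j) *
            (nsq (∏ j ∈ Finset.range l, c j) *
              ∑' i : Jt η, nsq (a i) * invMom (μ i) (l + 1)) := by
        rw [mul_one]
        calc nsq (∏ j ∈ Finset.Icc l (κ - 1), c j)
            = nsq (∏ j ∈ Finset.range κ, c j) *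
              ∑' i : Jt η, nsq (a i) * invMom (μ i) (l + 1) := h
          _ = nsq (∏ j ∈ Finset.Icc l (κ - 1), c j) *
              (nsq (∏ j ∈ Finset.range l, c j) *
                ∑' i : Jt η, nsq (a i) * invMom (μ i) (l + 1)) := by rw [hsplit]; ring
      exact ((ENNReal.mul_right_inj hQ0 hQt).mp h').symm
    · have h := keyL (fun s => (ENNReal.ofReal s ^ κ)⁻¹) (meas_powinv κ)
      have hL : ∫⁻ s, ((fun s => ENNReal.ofReal s ^ κ) *
          fun s => (ENNReal.ofReal s ^ κ)⁻¹) s ∂ν = ν (Set.Ioi 0) := by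
        rw [show ν (Set.Ioi 0) =
          ∫⁻ s, (Set.Ioi (0 : ℝ)).indicator (fun _ => 1) s ∂ν from by
            rw [lintegral_indicator measurableSet_Ioi _, setLIntegral_one]]
        refine lintegral_congr fun s => ?_
        simp only [Pi.mul_apply]
        rw [mul_comm]
        exact inv_pow_mul_pow_self hκ s
      have hR : ∀ i, (∫⁻ s, (g1 * fun s => (ENNReal.ofReal s ^ κ)⁻¹) s ∂(μ i)) =
          invMom (μ i) (κ + 1) := by
        intro i
        rw [show invMom (μ i) (κ + 1) =
          ∫⁻ s, (ENNReal.ofReal s ^ (κ + 1))⁻¹ ∂(μ i) from rfl]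
        refine lintegral_congr fun s => ?_
        simp only [Pi.mul_apply, hg1def]
        rw [inv_pow_mul_inv_pow s le_rfl κ, Nat.add_comm]
      simp only [hR] at h
      rw [hL] at h
      rw [← h]
      exact le_trans (measure_mono (Set.subset_univ _)) (le_of_eq hν1.measure_univ)
end
end
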